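/- Let a > 0, P > 0 and c > 0 be real numbers. The function g(τ) = τ·[log₂(1 + c) − log₂(1 + c/(1 + a·P/τ))] is concave on the interval (0, ∞). -/

import Mathlib

open Real Set

-- auxiliary: concavity transfers along pointwise equality on the set
lemma concaveOn_congr' {s : Set ℝ} {f g : ℝ → ℝ} (h : ∀ x ∈ s, f x = g x)
    (hg : ConcaveOn ℝ s g) : ConcaveOn ℝ s f := by
  refine ⟨hg.1, fun x hx y hy p q hp hq hpq => ?_⟩
  rw [h x hx, h y hy, h _ (hg.1 hx hy hp hq hpq)]
  exact hg.2 hx hy hp hq hpq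

section aux
variable (b d : ℝ)

noncomputable def g0 : ℝ → ℝ := fun τ =>
  τ * Real.logb 2 d + (Real.log 2)⁻¹ * (τ * Real.log (τ + b) - τ * Real.log (d * τ + b))

noncomputable def g1 : ℝ → ℝ := fun x =>
  Real.logb 2 d + (Real.log 2)⁻¹ *
    (Real.log (x + b) - Real.log (d * x + b) + x / (x + b) - d * x / (d * x + b))

noncomputable def g2 : ℝ → ℝ := fun x =>
  (Real.log 2)⁻¹ *
    ((x + b)⁻¹ - d / (d * x + b) + b / (x + b) ^ 2 - d * b / (d * x + b) ^ 2)

lemma hasDerivAt_g0 (hb : 0 < b) (hd : 0 < d) {x : ℝ} (hx : 0 < x) :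
    HasDerivAt (g0 b d) (g1 b d x) x := by
  have hu : (0:ℝ) < x + b := by linarith
  have hv : (0:ℝ) < d * x + b := by positivity
  have h1 : HasDerivAt (fun τ : ℝ => τ + b) 1 x := (hasDerivAt_id x).add_const b
  have h2 : HasDerivAt (fun τ : ℝ => d * τ + b) d x := by
    simpa using ((hasDerivAt_id x).const_mul d).add_const b
  have hl1 : HasDerivAt (fun τ : ℝ => Real.log (τ + b)) ((x + b)⁻¹ * 1) x :=
    by have := (Real.hasDerivAt_log hu.ne').comp x h1; exact this
  have hl2 : HasDerivAt (fun τ : ℝ => Real.log (d * τ + b)) ((d * x + b)⁻¹ * d) x :=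
    by have := (Real.hasDerivAt_log hv.ne').comp x h2; exact this
  have hm1 : HasDerivAt (fun τ : ℝ => τ * Real.log (τ + b))
      (1 * Real.log (x + b) + x * ((x + b)⁻¹ * 1)) x := (hasDerivAt_id x).mul hl1
  have hm2 : HasDerivAt (fun τ : ℝ => τ * Real.log (d * τ + b))
      (1 * Real.log (d * x + b) + x * ((d * x + b)⁻¹ * d)) x := (hasDerivAt_id x).mul hl2
  have hL : HasDerivAt (fun τ : ℝ => τ * Real.logb 2 d) (Real.logb 2 d) x := by
    simpa using (hasDerivAt_id x).mul_const (Real.logb 2 d)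
  have := hL.add (((hm1.sub hm2)).const_mul (Real.log 2)⁻¹)
  refine this.congr_deriv ?_
  unfold g1
  field_simp
  ring

lemma hasDerivAt_g1 (hb : 0 < b) (hd : 0 < d) {x : ℝ} (hx : 0 < x) :
    HasDerivAt (g1 b d) (g2 b d x) x := by
  have hu : (0:ℝ) < x + b := by linarith
  have hv : (0:ℝ) < d * x + b := by positivity
  have h1 : HasDerivAt (fun τ : ℝ => τ + b) 1 x := (hasDerivAt_id x).add_const b
  have h2 : HasDerivAt (fun τ : ℝ => d * τ + b) d x := by
    simpa using ((hasDerivAt_id x).const_mul d).add_const b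
  have hl1 : HasDerivAt (fun τ : ℝ => Real.log (τ + b)) ((x + b)⁻¹ * 1) x :=
    by have := (Real.hasDerivAt_log hu.ne').comp x h1; exact this
  have hl2 : HasDerivAt (fun τ : ℝ => Real.log (d * τ + b)) ((d * x + b)⁻¹ * d) x :=
    by have := (Real.hasDerivAt_log hv.ne').comp x h2; exact this
  have hq1 : HasDerivAt (fun τ : ℝ => τ / (τ + b))
      ((1 * (x + b) - x * 1) / (x + b) ^ 2) x :=
    (hasDerivAt_id x).div h1 hu.ne'
  have hdx : HasDerivAt (fun τ : ℝ => d * τ) d x := by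
    simpa using (hasDerivAt_id x).const_mul d
  have hq2 : HasDerivAt (fun τ : ℝ => d * τ / (d * τ + b))
      ((d * (d * x + b) - d * x * d) / (d * x + b) ^ 2) x :=
    hdx.div h2 hv.ne'
  have := (((hl1.sub hl2).add hq1).sub hq2).const_mul (Real.log 2)⁻¹
  have h0 : HasDerivAt (fun x_1 : ℝ => Real.logb 2 d +
      (Real.log 2)⁻¹ * (Real.log (x_1 + b) - Real.log (d * x_1 + b) + x_1 / (x_1 + b)
        - d * x_1 / (d * x_1 + b)))
      ((Real.log 2)⁻¹ * (((x + b)⁻¹ * 1 - (d * x + b)⁻¹ * d)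
        + (1 * (x + b) - x * 1) / (x + b) ^ 2
        - (d * (d * x + b) - d * x * d) / (d * x + b) ^ 2)) x := by
    simpa using (this.const_add (Real.logb 2 d))
  refine h0.congr_deriv ?_
  unfold g2
  field_simp
  ring

lemma g2_nonpos (hb : 0 < b) (hd : 1 < d) {x : ℝ} (hx : 0 < x) : g2 b d x ≤ 0 := by
  have hu : (0:ℝ) < x + b := by linarith
  have hv : (0:ℝ) < d * x + b := by positivity
  have hlog2 : (0:ℝ) < Real.log 2 := Real.log_pos (by norm_num)
  have key : (x + b)⁻¹ + b / (x + b) ^ 2 ≤ d / (d * x + b) + d * b / (d * x + b) ^ 2 := by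
    have e1 : (x + b)⁻¹ + b / (x + b) ^ 2 = (x + b + b) / (x + b) ^ 2 := by
      field_simp
    have e2 : d / (d * x + b) + d * b / (d * x + b) ^ 2
        = d * (d * x + b + b) / (d * x + b) ^ 2 := by
      field_simp
    rw [e1, e2, div_le_div_iff₀ (by positivity) (by positivity)]
    nlinarith [sq_nonneg (x + b), sq_nonneg (d * x + b), mul_pos hb hx,
      mul_pos (mul_pos hb hb) hx, mul_pos hb (mul_pos hb hb), sq_nonneg (d - 1),
      mul_pos (mul_pos hb hb) (mul_pos hb hx)]
  have : (x + b)⁻¹ - d / (d * x + b) + b / (x + b) ^ 2 - d * b / (d * x + b) ^ 2 ≤ 0 := by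
    linarith
  unfold g2
  exact mul_nonpos_of_nonneg_of_nonpos (by positivity) this

lemma g0_concave (hb : 0 < b) (hd : 1 < d) : ConcaveOn ℝ (Set.Ioi 0) (g0 b d) := by
  have hd0 : (0:ℝ) < d := by linarith
  have hmem : ∀ x ∈ interior (Set.Ioi (0:ℝ)), 0 < x := by
    simpa [interior_Ioi] using fun x (hx : x ∈ Set.Ioi (0:ℝ)) => hx
  have hderiv : ∀ x ∈ Set.Ioi (0:ℝ), deriv (g0 b d) x = g1 b d x := fun x hx =>
    (hasDerivAt_g0 b d hb hd0 hx).deriv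
  apply concaveOn_of_deriv2_nonpos (convex_Ioi 0)
  · exact fun x hx => (hasDerivAt_g0 b d hb hd0 hx).continuousAt.continuousWithinAt
  · rw [interior_Ioi]
    exact fun x hx => ((hasDerivAt_g0 b d hb hd0 hx).differentiableAt).differentiableWithinAt
  · rw [interior_Ioi]
    intro x hx
    have hev : deriv (g0 b d) =ᶠ[nhds x] g1 b d :=
      Filter.eventuallyEq_of_mem (isOpen_Ioi.mem_nhds hx) hderiv
    exact (((hasDerivAt_g1 b d hb hd0 hx).congr_of_eventuallyEq
      hev).differentiableAt).differentiableWithinAt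
  · rw [interior_Ioi]
    intro x hx
    have hev : deriv (g0 b d) =ᶠ[nhds x] g1 b d :=
      Filter.eventuallyEq_of_mem (isOpen_Ioi.mem_nhds hx) hderiv
    have h2 : deriv (deriv (g0 b d)) x = g2 b d x := by
      rw [hev.deriv_eq]
      exact (hasDerivAt_g1 b d hb hd0 hx).deriv
    simpa [Function.iterate_succ, h2] using g2_nonpos b d hb hd hx

end aux

/-- The single-user TDMA rate `g(τ) = τ·[log₂(1+c) − log₂(1 + c/(1 + aP/τ))]`
is concave on `(0, ∞)`. -/
theorem tdma_rate_concave (a P c : ℝ) (ha : 0 < a) (hP : 0 < P) (hc : 0 < c) :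
    ConcaveOn ℝ (Set.Ioi 0)
      (fun τ : ℝ =>
        τ * (Real.logb 2 (1 + c) - Real.logb 2 (1 + c / (1 + a * P / τ)))) := by
  set b := a * P with hbdef
  have hb : 0 < b := mul_pos ha hP
  have hd : (1:ℝ) < 1 + c := by linarith
  apply concaveOn_congr' _ (g0_concave b (1 + c) hb hd)
  intro τ hτ
  have hτ0 : (0:ℝ) < τ := hτ
  have hu : (0:ℝ) < τ + b := by linarith
  have hv : (0:ℝ) < (1 + c) * τ + b := by positivity
  have harg : 1 + c / (1 + a * P / τ) = ((1 + c) * τ + b) / (τ + b) := by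
    rw [hbdef] at hu hv ⊢
    field_simp
    ring
  rw [harg]
  simp only [Real.logb, Real.log_div hv.ne' hu.ne']
  unfold g0
  simp only [Real.logb]
  have hlog2 : Real.log 2 ≠ 0 := ne_of_gt (Real.log_pos (by norm_num))
  field_simp
  ring
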